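/- Under the same discounted POMDP setup with bounded measurable cost, if γ_{P_n}* is an optimal policy designed for the (incorrect) prior P_n, then the loss from applying it to the true prior P satisfies |J_β(P,Q,γ_{P_n}*) − J_β*(P,Q)| ≤ 2 ‖P_n − P‖_TV · ‖c‖_∞ / (1 − β). -/

import Mathlib

open MeasureTheory ProbabilityTheory Filter

namespace Stmt17

variable {X Y U : Type*} [MeasurableSpace X] [MeasurableSpace Y] [MeasurableSpace U]

/-- Total variation distance (factor-2 convention). -/
noncomputable def tvDist {α : Type*} [MeasurableSpace α] (μ ν : Measure α) : ℝ :=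
  2 * ⨆ B : {B : Set α // MeasurableSet B}, |(μ B.1).toReal - (ν B.1).toReal|

/-- The joint law of `(X_t, Y_0, …, Y_t)` for the partially observed controlled Markov
chain with prior `P`, transition kernel `T`, observation channel `Q`, under a (deterministic,
observation-feedback) policy `γ = (γ_t)` with `U_t = γ_t(Y_0,…,Y_t)`. -/
noncomputable def hist (T : Kernel (X × U) X) (Q : Kernel X Y)
    (γ : (t : ℕ) → (Fin (t + 1) → Y) → U) :
    (t : ℕ) → Measure X → Measure (X × (Fin (t + 1) → Y))
  | 0, P => (P ⊗ₘ Q).map (fun p => (p.1, fun _ => p.2))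
  | (t + 1), P => (hist T Q γ t P).bind
      (fun p => ((T (p.1, γ t p.2)) ⊗ₘ Q).map (fun q => (q.1, Fin.snoc p.2 q.2)))

/-- Admissible policies: at each time `t`, a measurable function of the observations
`Y_0, …, Y_t`. -/
def Pol (Y U : Type*) [MeasurableSpace Y] [MeasurableSpace U] : Type _ :=
  {γ : (t : ℕ) → (Fin (t + 1) → Y) → U // ∀ t, Measurable (γ t)}

/-- The infinite-horizon discounted cost `J_β(P,T,γ) = E_P^γ[Σ_t β^t c(X_t,U_t)]`. -/
noncomputable def Jbeta (β : ℝ) (c : X → U → ℝ) (T : Kernel (X × U) X) (Q : Kernel X Y)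
    (P : Measure X) (γ : (t : ℕ) → (Fin (t + 1) → Y) → U) : ℝ :=
  ∑' t : ℕ, β ^ t * ∫ p, c p.1 (γ t p.2) ∂(hist T Q γ t P)

/-- The optimal discounted cost `J_β*(P,T)`. -/
noncomputable def Jstar (β : ℝ) (c : X → U → ℝ) (T : Kernel (X × U) X) (Q : Kernel X Y)
    (P : Measure X) : ℝ :=
  ⨅ γ : Pol Y U, Jbeta β c T Q P γ.1



/-! ### Total variation -/

section TV

variable {α : Type*} [MeasurableSpace α]

/-- half the total variation distance, as a supremum over measurable sets. -/
noncomputable def tvS (μ ν : Measure α) : ℝ :=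
  ⨆ B : {B : Set α // MeasurableSet B}, |(μ B.1).toReal - (ν B.1).toReal|

lemma toReal_prob_le_one (ρ : Measure α) [IsProbabilityMeasure ρ] (s : Set α) :
    (ρ s).toReal ≤ 1 := by
  have h := ENNReal.toReal_mono (by simp : (1 : ENNReal) ≠ ⊤) (prob_le_one (μ := ρ) (s := s))
  simpa using h

lemma tvS_bddAbove (μ ν : Measure α) [IsProbabilityMeasure μ] [IsProbabilityMeasure ν] :
    BddAbove (Set.range fun B : {B : Set α // MeasurableSet B} =>
      |(μ B.1).toReal - (ν B.1).toReal|) := by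
  refine ⟨1, ?_⟩
  rintro x ⟨B, rfl⟩
  have h1 : (μ B.1).toReal ≤ 1 := toReal_prob_le_one μ B.1
  have h2 : (ν B.1).toReal ≤ 1 := toReal_prob_le_one ν B.1
  have h3 : 0 ≤ (μ B.1).toReal := ENNReal.toReal_nonneg
  have h4 : 0 ≤ (ν B.1).toReal := ENNReal.toReal_nonneg
  rw [abs_sub_le_iff]
  constructor <;> linarith

lemma tvS_nonneg (μ ν : Measure α) [IsProbabilityMeasure μ] [IsProbabilityMeasure ν] :
    0 ≤ tvS μ ν := by
  have h := le_ciSup (tvS_bddAbove μ ν) ⟨∅, MeasurableSet.empty⟩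
  simpa [tvS] using h

lemma tvS_comm (μ ν : Measure α) : tvS μ ν = tvS ν μ := by
  unfold tvS
  congr 1
  funext B
  rw [abs_sub_comm]

lemma integral_sub_le_tvS (μ ν : Measure α) [IsProbabilityMeasure μ] [IsProbabilityMeasure ν]
    {g : α → ℝ} (hg : Measurable g) {M : ℝ} (h0 : ∀ x, 0 ≤ g x) (hM : ∀ x, g x ≤ M) :
    ∫ x, g x ∂μ - ∫ x, g x ∂ν ≤ M * tvS μ ν := by
  haveI : Nonempty α := by
    by_contra h
    rw [not_nonempty_iff] at h
    have h1 : μ Set.univ = 1 := measure_univ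
    rw [Set.univ_eq_empty_iff.mpr h, measure_empty] at h1
    exact zero_ne_one h1
  have hM0 : 0 ≤ M := (h0 (Classical.arbitrary α)).trans (hM _)
  haveI : IsFiniteMeasure (volume.restrict (Set.Ioc (0:ℝ) M)) :=
    ⟨by rw [Measure.restrict_apply_univ]; exact measure_Ioc_lt_top⟩
  have hint : ∀ (ρ : Measure α), IsProbabilityMeasure ρ → Integrable g ρ := by
    intro ρ hρ
    refine Integrable.mono' (integrable_const M) hg.aestronglyMeasurable ?_
    filter_upwards with x
    rw [Real.norm_eq_abs, abs_of_nonneg (h0 x)]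
    exact hM x
  have key : ∀ (ρ : Measure α), IsProbabilityMeasure ρ →
      ∫ x, g x ∂ρ = ∫ t in Set.Ioc (0:ℝ) M, (ρ {a | t < g a}).toReal := by
    intro ρ hρ
    rw [(hint ρ hρ).integral_eq_integral_meas_lt (Eventually.of_forall h0)]
    refine setIntegral_eq_of_subset_of_forall_diff_eq_zero measurableSet_Ioi
      Set.Ioc_subset_Ioi_self ?_
    intro t ht
    have htM : M < t := by
      by_contra hMt
      push_neg at hMt
      exact ht.2 (Set.mem_Ioc.mpr ⟨Set.mem_Ioi.mp ht.1, hMt⟩)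
    have he : {a | t < g a} = ∅ := by
      ext a
      simp only [Set.mem_setOf_eq, Set.mem_empty_iff_false, iff_false, not_lt]
      exact (hM a).trans htM.le
    rw [he]
    simp
  have hFanti : ∀ (ρ : Measure α), IsProbabilityMeasure ρ →
      Antitone (fun t : ℝ => (ρ {a | t < g a}).toReal) := by
    intro ρ hρ s t hst
    refine ENNReal.toReal_mono (measure_ne_top ρ _) (measure_mono ?_)
    intro a ha
    exact lt_of_le_of_lt hst ha
  have hFint : ∀ (ρ : Measure α), IsProbabilityMeasure ρ →
      IntegrableOn (fun t : ℝ => (ρ {a | t < g a}).toReal) (Set.Ioc 0 M) := by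
    intro ρ hρ
    refine Integrable.mono' (integrable_const 1)
      ((hFanti ρ hρ).measurable).aestronglyMeasurable ?_
    filter_upwards with t
    rw [Real.norm_eq_abs, abs_of_nonneg ENNReal.toReal_nonneg]
    exact toReal_prob_le_one ρ _
  rw [key μ ‹_›, key ν ‹_›, ← integral_sub (hFint μ ‹_›) (hFint ν ‹_›)]
  have hle : ∀ t : ℝ, (μ {a | t < g a}).toReal - (ν {a | t < g a}).toReal ≤ tvS μ ν := by
    intro t
    have hBm : MeasurableSet {a | t < g a} := measurableSet_lt measurable_const hg
    calc (μ {a | t < g a}).toReal - (ν {a | t < g a}).toReal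
        ≤ |(μ {a | t < g a}).toReal - (ν {a | t < g a}).toReal| := le_abs_self _
      _ ≤ tvS μ ν := le_ciSup (tvS_bddAbove μ ν) ⟨{a | t < g a}, hBm⟩
  calc ∫ t in Set.Ioc (0:ℝ) M, ((μ {a | t < g a}).toReal - (ν {a | t < g a}).toReal)
      ≤ ∫ _t in Set.Ioc (0:ℝ) M, tvS μ ν := by
        refine integral_mono ((hFint μ ‹_›).sub (hFint ν ‹_›)) (integrable_const _) ?_
        intro t
        exact hle t
    _ = M * tvS μ ν := by
        rw [setIntegral_const, Real.volume_real_Ioc_of_le hM0, smul_eq_mul,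
          sub_zero]

lemma abs_integral_sub_le_tvS (μ ν : Measure α) [IsProbabilityMeasure μ] [IsProbabilityMeasure ν]
    {g : α → ℝ} (hg : Measurable g) {M : ℝ} (h0 : ∀ x, 0 ≤ g x) (hM : ∀ x, g x ≤ M) :
    |∫ x, g x ∂μ - ∫ x, g x ∂ν| ≤ M * tvS μ ν := by
  rw [abs_sub_le_iff]
  refine ⟨integral_sub_le_tvS μ ν hg h0 hM, ?_⟩
  rw [tvS_comm μ ν]
  exact integral_sub_le_tvS ν μ hg h0 hM

end TV

/-! ### Kernel representation of `hist` -/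

section Ker

lemma measurable_snoc {n : ℕ} :
    Measurable (fun r : (Fin (n + 1) → Y) × Y => (Fin.snoc r.1 r.2 : Fin (n + 2) → Y)) := by
  refine measurable_pi_lambda _ fun i => ?_
  refine Fin.lastCases ?_ ?_ i
  · simp only [Fin.snoc_last]
    exact measurable_snd
  · intro j
    simp only [Fin.snoc_castSucc]
    exact (measurable_pi_apply j).comp measurable_fst

lemma measurable_histStep {n : ℕ} :
    Measurable (fun r : (X × (Fin (n + 1) → Y)) × (X × Y) =>
      ((r.2.1, Fin.snoc r.1.2 r.2.2) : X × (Fin (n + 2) → Y))) :=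
  (measurable_fst.comp measurable_snd).prodMk
    (measurable_snoc.comp
      ((measurable_snd.comp measurable_fst).prodMk (measurable_snd.comp measurable_snd)))

lemma measurable_base :
    Measurable (fun q : X × Y => ((q.1, fun _ : Fin 1 => q.2) : X × (Fin 1 → Y))) :=
  measurable_fst.prodMk (measurable_pi_lambda _ fun _ => measurable_snd)

variable (T : Kernel (X × U) X) [IsMarkovKernel T] (Q : Kernel X Y) [IsMarkovKernel Q]

noncomputable def stepK {t : ℕ} (γt : (Fin (t + 1) → Y) → U) (hγt : Measurable γt) :
    Kernel (X × (Fin (t + 1) → Y)) (X × (Fin (t + 2) → Y)) :=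
  ((Kernel.deterministic (id : (X × (Fin (t + 1) → Y)) → (X × (Fin (t + 1) → Y))) measurable_id)
      ⊗ₖ (Kernel.prodMkLeft _
        ((T.comap (fun p : X × (Fin (t + 1) → Y) => (p.1, γt p.2))
            (measurable_fst.prodMk (hγt.comp measurable_snd)))
          ⊗ₖ (Kernel.prodMkLeft _ Q)))).map
    (fun r => (r.2.1, Fin.snoc r.1.2 r.2.2))

instance stepK_isMarkov {t : ℕ} (γt : (Fin (t + 1) → Y) → U) (hγt : Measurable γt) :
    IsMarkovKernel (stepK T Q γt hγt) :=
  Kernel.IsMarkovKernel.map _ measurable_histStep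

lemma stepK_apply {t : ℕ} (γt : (Fin (t + 1) → Y) → U) (hγt : Measurable γt)
    (p : X × (Fin (t + 1) → Y)) :
    stepK T Q γt hγt p
      = ((T (p.1, γt p.2)) ⊗ₘ Q).map (fun q => (q.1, Fin.snoc p.2 q.2)) := by
  set κ1 := ((T.comap (fun p : X × (Fin (t + 1) → Y) => (p.1, γt p.2))
      (measurable_fst.prodMk (hγt.comp measurable_snd)))
    ⊗ₖ (Kernel.prodMkLeft _ Q)) with hκ1
  have h1 : κ1 p = (T (p.1, γt p.2)) ⊗ₘ Q := by
    ext s hs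
    rw [hκ1, Kernel.compProd_apply hs, Measure.compProd_apply hs, Kernel.comap_apply]
    rfl
  have h2 : ((Kernel.deterministic
        (id : (X × (Fin (t + 1) → Y)) → (X × (Fin (t + 1) → Y))) measurable_id)
      ⊗ₖ (Kernel.prodMkLeft _ κ1)) p = (κ1 p).map (Prod.mk p) := by
    ext s hs
    rw [Kernel.compProd_apply hs, Kernel.deterministic_apply]
    simp only [Kernel.prodMkLeft_apply']
    have hmeas : Measurable fun b : X × (Fin (t + 1) → Y) => κ1 b (Prod.mk b ⁻¹' s) :=
      Kernel.measurable_kernel_prodMk_left hs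
    rw [lintegral_dirac' _ hmeas, Measure.map_apply measurable_prodMk_left hs]
    rfl
  unfold stepK
  rw [Kernel.map_apply _ measurable_histStep, h2, h1,
    Measure.map_map measurable_histStep measurable_prodMk_left]
  rfl

noncomputable def baseK : Kernel X (X × (Fin 1 → Y)) :=
  ((Kernel.deterministic (id : X → X) measurable_id) ⊗ₖ (Kernel.prodMkLeft X Q)).map
    (fun q : X × Y => (q.1, fun _ : Fin 1 => q.2))

instance baseK_isMarkov : IsMarkovKernel (baseK Q) :=
  Kernel.IsMarkovKernel.map _ measurable_base

lemma baseK_bind (P : Measure X) [IsProbabilityMeasure P] :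
    P.bind (baseK Q) = (P ⊗ₘ Q).map (fun p : X × Y => (p.1, fun _ : Fin 1 => p.2)) := by
  ext s hs
  rw [Measure.bind_apply hs (Kernel.measurable _).aemeasurable, Measure.map_apply measurable_base hs,
    Measure.compProd_apply (measurable_base hs)]
  congr 1
  funext x
  unfold baseK
  rw [Kernel.map_apply _ measurable_base, Measure.map_apply measurable_base hs,
    Kernel.compProd_apply (measurable_base hs), Kernel.deterministic_apply]
  simp only [Kernel.prodMkLeft_apply']
  have hmeas : Measurable fun b : X =>
      Q b (Prod.mk b ⁻¹' ((fun q : X × Y => ((q.1, fun _ : Fin 1 => q.2) : X × (Fin 1 → Y))) ⁻¹' s)) :=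
    Kernel.measurable_kernel_prodMk_left (measurable_base hs)
  rw [lintegral_dirac' _ hmeas]
  rfl

noncomputable def hker (γ : (t : ℕ) → (Fin (t + 1) → Y) → U) (hγ : ∀ t, Measurable (γ t)) :
    (t : ℕ) → Kernel X (X × (Fin (t + 1) → Y))
  | 0 => baseK Q
  | (t + 1) => (stepK T Q (γ t) (hγ t)) ∘ₖ (hker γ hγ t)

instance hker_isMarkov (γ : (t : ℕ) → (Fin (t + 1) → Y) → U) (hγ : ∀ t, Measurable (γ t)) :
    ∀ t, IsMarkovKernel (hker T Q γ hγ t)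
  | 0 => by unfold hker; exact baseK_isMarkov Q
  | (t + 1) => by
      haveI := hker_isMarkov γ hγ t
      unfold hker
      infer_instance

lemma hist_eq_bind (γ : (t : ℕ) → (Fin (t + 1) → Y) → U) (hγ : ∀ t, Measurable (γ t))
    (P : Measure X) [IsProbabilityMeasure P] :
    ∀ t, hist T Q γ t P = P.bind (hker T Q γ hγ t)
  | 0 => by
      rw [hist, hker, baseK_bind]
  | (t + 1) => by
      rw [hist]
      have hfun : (fun p : X × (Fin (t + 1) → Y) =>
            ((T (p.1, γ t p.2)) ⊗ₘ Q).map (fun q => (q.1, Fin.snoc p.2 q.2)))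
          = ⇑(stepK T Q (γ t) (hγ t)) := by
        funext p
        rw [stepK_apply]
      rw [hfun, hist_eq_bind γ hγ P t,
        Measure.bind_bind (Kernel.measurable _).aemeasurable (Kernel.measurable _).aemeasurable]
      show P.bind _ = P.bind _
      congr 1

theorem hist_isProb (γ : (t : ℕ) → (Fin (t + 1) → Y) → U) (hγ : ∀ t, Measurable (γ t))
    (P : Measure X) [IsProbabilityMeasure P] (t : ℕ) :
    IsProbabilityMeasure (hist T Q γ t P) := by
  rw [hist_eq_bind T Q γ hγ P t]
  constructor
  rw [Measure.bind_apply MeasurableSet.univ (Kernel.measurable _).aemeasurable]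
  simp

lemma hist_set_diff (γ : (t : ℕ) → (Fin (t + 1) → Y) → U) (hγ : ∀ t, Measurable (γ t))
    (μ ν : Measure X) [IsProbabilityMeasure μ] [IsProbabilityMeasure ν] (t : ℕ)
    {B : Set (X × (Fin (t + 1) → Y))} (hB : MeasurableSet B) :
    |(hist T Q γ t μ B).toReal - (hist T Q γ t ν B).toReal| ≤ tvS μ ν := by
  have hrep : ∀ (ρ : Measure X), IsProbabilityMeasure ρ →
      (hist T Q γ t ρ B).toReal = ∫ x, (hker T Q γ hγ t x B).toReal ∂ρ := by
    intro ρ hρ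
    rw [hist_eq_bind T Q γ hγ ρ t, Measure.bind_apply hB (Kernel.measurable _).aemeasurable,
      ← integral_toReal (((hker T Q γ hγ t).measurable_coe hB).aemeasurable)
        (Eventually.of_forall fun x => measure_lt_top _ _)]
  rw [hrep μ ‹_›, hrep ν ‹_›]
  have hmeas : Measurable fun x => (hker T Q γ hγ t x B).toReal :=
    ((hker T Q γ hγ t).measurable_coe hB).ennreal_toReal
  have h := abs_integral_sub_le_tvS μ ν hmeas (fun x => ENNReal.toReal_nonneg)
      (fun x => toReal_prob_le_one _ _)
  simpa using h

end Ker

/-! ### Cost bounds -/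

section Cost

variable (T : Kernel (X × U) X) [IsMarkovKernel T] (Q : Kernel X Y) [IsMarkovKernel Q]

lemma Jbeta_diff {β : ℝ} (hβ0 : 0 < β) (hβ1 : β < 1)
    {c : X → U → ℝ} (hc : Measurable (Function.uncurry c)) (hc0 : ∀ x u, 0 ≤ c x u)
    {M : ℝ} (hM0 : 0 ≤ M) (hcM : ∀ x u, |c x u| ≤ M)
    (γ : (t : ℕ) → (Fin (t + 1) → Y) → U) (hγ : ∀ t, Measurable (γ t))
    (μ ν : Measure X) [IsProbabilityMeasure μ] [IsProbabilityMeasure ν] :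
    |Jbeta β c T Q μ γ - Jbeta β c T Q ν γ| ≤ M * tvS μ ν / (1 - β) := by
  have hfm : ∀ t : ℕ, Measurable fun p : X × (Fin (t + 1) → Y) => c p.1 (γ t p.2) := fun t =>
    hc.comp (measurable_fst.prodMk ((hγ t).comp measurable_snd))
  have habs : ∀ (ρ : Measure X) (_ : IsProbabilityMeasure ρ) (t : ℕ),
      |∫ p, c p.1 (γ t p.2) ∂(hist T Q γ t ρ)| ≤ M := by
    intro ρ hρ t
    haveI := hist_isProb T Q γ hγ ρ t
    have h := norm_integral_le_of_norm_le_const (μ := hist T Q γ t ρ)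
      (f := fun p : X × (Fin (t + 1) → Y) => c p.1 (γ t p.2)) (C := M)
      (Eventually.of_forall fun p => by rw [Real.norm_eq_abs]; exact hcM _ _)
    rw [Real.norm_eq_abs] at h
    simpa [measure_univ] using h
  have hsum : ∀ (ρ : Measure X), IsProbabilityMeasure ρ →
      Summable (fun t : ℕ => β ^ t * ∫ p, c p.1 (γ t p.2) ∂(hist T Q γ t ρ)) := by
    intro ρ hρ
    refine Summable.of_norm_bounded
      ((summable_geometric_of_lt_one hβ0.le hβ1).mul_right M) ?_
    intro t
    rw [Real.norm_eq_abs, abs_mul, abs_of_nonneg (pow_nonneg hβ0.le t)]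
    exact mul_le_mul_of_nonneg_left (habs ρ hρ t) (pow_nonneg hβ0.le t)
  have hterm : ∀ t : ℕ,
      |β ^ t * ∫ p, c p.1 (γ t p.2) ∂(hist T Q γ t μ)
        - β ^ t * ∫ p, c p.1 (γ t p.2) ∂(hist T Q γ t ν)| ≤ β ^ t * (M * tvS μ ν) := by
    intro t
    haveI := hist_isProb T Q γ hγ μ t
    haveI := hist_isProb T Q γ hγ ν t
    rw [← mul_sub, abs_mul, abs_of_nonneg (pow_nonneg hβ0.le t)]
    refine mul_le_mul_of_nonneg_left ?_ (pow_nonneg hβ0.le t)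
    have h1 := abs_integral_sub_le_tvS (hist T Q γ t μ) (hist T Q γ t ν) (hfm t)
      (fun p => hc0 _ _) (fun p => le_of_abs_le (hcM _ _))
    refine h1.trans (mul_le_mul_of_nonneg_left ?_ hM0)
    exact ciSup_le fun B => hist_set_diff T Q γ hγ μ ν t B.2
  have hsumd : Summable (fun t : ℕ =>
      |β ^ t * ∫ p, c p.1 (γ t p.2) ∂(hist T Q γ t μ)
        - β ^ t * ∫ p, c p.1 (γ t p.2) ∂(hist T Q γ t ν)|) := by
    refine Summable.of_nonneg_of_le (fun t => abs_nonneg _) hterm ?_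
    exact (summable_geometric_of_lt_one hβ0.le hβ1).mul_right _
  rw [Jbeta, Jbeta, ← Summable.tsum_sub (hsum μ ‹_›) (hsum ν ‹_›)]
  calc |∑' t : ℕ, (β ^ t * ∫ p, c p.1 (γ t p.2) ∂(hist T Q γ t μ)
          - β ^ t * ∫ p, c p.1 (γ t p.2) ∂(hist T Q γ t ν))|
      ≤ ∑' t : ℕ, |β ^ t * ∫ p, c p.1 (γ t p.2) ∂(hist T Q γ t μ)
          - β ^ t * ∫ p, c p.1 (γ t p.2) ∂(hist T Q γ t ν)| := by
        have := norm_tsum_le_tsum_norm (f := fun t : ℕ =>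
          β ^ t * ∫ p, c p.1 (γ t p.2) ∂(hist T Q γ t μ)
            - β ^ t * ∫ p, c p.1 (γ t p.2) ∂(hist T Q γ t ν)) (by simpa [Real.norm_eq_abs] using hsumd)
        simpa [Real.norm_eq_abs] using this
    _ ≤ ∑' t : ℕ, β ^ t * (M * tvS μ ν) := by
        refine Summable.tsum_le_tsum hterm hsumd ?_
        exact (summable_geometric_of_lt_one hβ0.le hβ1).mul_right _
    _ = M * tvS μ ν / (1 - β) := by
        rw [tsum_mul_right, tsum_geometric_of_lt_one hβ0.le hβ1, inv_mul_eq_div]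

lemma Jbeta_nonneg {β : ℝ} (hβ0 : 0 < β) {c : X → U → ℝ} (hc0 : ∀ x u, 0 ≤ c x u)
    (ρ : Measure X) (γ : (t : ℕ) → (Fin (t + 1) → Y) → U) :
    0 ≤ Jbeta β c T Q ρ γ :=
  tsum_nonneg fun t =>
    mul_nonneg (pow_nonneg hβ0.le t) (integral_nonneg fun p => hc0 _ _)

end Cost

/-- Robustness of the discounted POMDP to an incorrect prior: if `γ_{P_n}*` is an optimal
policy designed for the incorrect prior `P_n`, then applying it to the true prior `P` incurs
a loss of at most `2 ‖P_n − P‖_TV ‖c‖_∞ / (1−β)`. -/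
theorem discounted_robustness_tv_bound [Nonempty U]
    (β : ℝ) (hβ0 : 0 < β) (hβ1 : β < 1)
    (c : X → U → ℝ) (hc : Measurable (Function.uncurry c))
    (hc0 : ∀ x u, 0 ≤ c x u) (M : ℝ) (hcM : ∀ x u, |c x u| ≤ M)
    (T : Kernel (X × U) X) [IsMarkovKernel T]
    (Q : Kernel X Y) [IsMarkovKernel Q]
    (P Pn : Measure X) [IsProbabilityMeasure P] [IsProbabilityMeasure Pn]
    (γn : Pol Y U) (hγn : Jbeta β c T Q Pn γn.1 = Jstar β c T Q Pn) :
    |Jbeta β c T Q P γn.1 - Jstar β c T Q P| ≤ 2 * tvDist Pn P * M / (1 - β) := by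
  haveI : Nonempty X := by
    by_contra h
    rw [not_nonempty_iff] at h
    have h1 : P Set.univ = 1 := measure_univ
    rw [Set.univ_eq_empty_iff.mpr h, measure_empty] at h1
    exact zero_ne_one h1
  haveI : Nonempty (Pol Y U) :=
    ⟨⟨fun _ _ => Classical.arbitrary U, fun _ => measurable_const⟩⟩
  have hM0 : 0 ≤ M :=
    (hc0 (Classical.arbitrary X) (Classical.arbitrary U)).trans (le_of_abs_le (hcM _ _))
  have hβ' : (0:ℝ) < 1 - β := by linarith
  set S := tvS Pn P with hS
  have hS0 : 0 ≤ S := tvS_nonneg Pn P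
  have hbdd : ∀ (ρ : Measure X), BddBelow (Set.range fun γ : Pol Y U => Jbeta β c T Q ρ γ.1) := by
    intro ρ
    refine ⟨0, ?_⟩
    rintro x ⟨γ', rfl⟩
    exact Jbeta_nonneg T Q hβ0 hc0 ρ γ'.1
  -- one-sided Jstar bound
  have hJstar : ∀ (ρ σ : Measure X), IsProbabilityMeasure ρ → IsProbabilityMeasure σ →
      Jstar β c T Q ρ - Jstar β c T Q σ ≤ M * tvS ρ σ / (1 - β) := by
    intro ρ σ hρ hσ
    have h : ∀ γ : Pol Y U,
        Jstar β c T Q ρ - M * tvS ρ σ / (1 - β) ≤ Jbeta β c T Q σ γ.1 := by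
      intro γ
      have h1 : Jstar β c T Q ρ ≤ Jbeta β c T Q ρ γ.1 := ciInf_le (hbdd ρ) γ
      have h2 := Jbeta_diff T Q hβ0 hβ1 hc hc0 hM0 hcM γ.1 γ.2 ρ σ
      have h3 := (abs_le.mp h2).2
      linarith
    have h4 : Jstar β c T Q ρ - M * tvS ρ σ / (1 - β) ≤ Jstar β c T Q σ := le_ciInf h
    linarith
  have h2 : |Jstar β c T Q Pn - Jstar β c T Q P| ≤ M * S / (1 - β) := by
    rw [abs_sub_le_iff]
    constructor
    · exact hJstar Pn P ‹_› ‹_›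
    · have := hJstar P Pn ‹_› ‹_›
      rwa [tvS_comm P Pn] at this
  have h1 : |Jbeta β c T Q P γn.1 - Jbeta β c T Q Pn γn.1| ≤ M * S / (1 - β) := by
    have h := Jbeta_diff T Q hβ0 hβ1 hc hc0 hM0 hcM γn.1 γn.2 P Pn
    rw [tvS_comm P Pn] at h
    exact h
  have htv : tvDist Pn P = 2 * S := rfl
  rw [htv]
  have hcalc : |Jbeta β c T Q P γn.1 - Jstar β c T Q P| ≤ 2 * (M * S / (1 - β)) := by
    calc |Jbeta β c T Q P γn.1 - Jstar β c T Q P|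
        ≤ |Jbeta β c T Q P γn.1 - Jbeta β c T Q Pn γn.1|
          + |Jbeta β c T Q Pn γn.1 - Jstar β c T Q P| := abs_sub_le _ _ _
      _ ≤ M * S / (1 - β) + M * S / (1 - β) := by
          have h2' : |Jbeta β c T Q Pn γn.1 - Jstar β c T Q P| ≤ M * S / (1 - β) := by
            rw [hγn]; exact h2
          exact add_le_add h1 h2'
      _ = 2 * (M * S / (1 - β)) := by ring
  refine hcalc.trans ?_
  have heq : 2 * (M * S / (1 - β)) = 2 * M * S / (1 - β) := by ring
  rw [heq]
  have hnum : 2 * M * S ≤ 2 * (2 * S) * M := by nlinarith [mul_nonneg hM0 hS0]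
  exact (div_le_div_iff_of_pos_right hβ').mpr hnum

end Stmt17
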